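/- (Generalized Reset Lemma.) Let an integral ω-Shannon inequality over a finite set V be given, with left-hand side Σ_{ℓ∈[L]} λ_ℓ·h(U_ℓ) + Σ_{j∈[J]} ( α_j·h(X_j|G_j) + β_j·h(Y_j|G_j) + ζ_j·h(Z_j|G_j) + κ_j·h(G_j) ) and right-hand side Σ_{i∈[I]} w_i·h(Y_i|X_i), and suppose that for some i_0 ∈ [I] we have X_{i_0} = ∅ and w_{i_0} > 0. Then there exist nonnegative integers λ'_ℓ (ℓ∈[L]), α'_j, β'_j, ζ'_j, κ'_j (j∈[J]), w'_i (i∈[I]) and a subset J' ⊆ [J] with κ'_j > 0 for j ∈ J' and α'_j = β'_j = ζ'_j = κ'_j = 0 for j ∉ J', such that Σ_{ℓ∈[L]} λ'_ℓ·h(U_ℓ) + Σ_{j∈J'} ( α'_j·h(X_j|G_j) + β'_j·h(Y_j|G_j) + ζ'_j·h(Z_j|G_j) + κ'_j·h(G_j) ) ≤ Σ_{i∈[I]} w'_i·h(Y_i|X_i) is again an integral ω-Shannon inequality, and moreover w'_{i_0} ≤ w_{i_0} − 1, w'_i ≤ w_i for all i ∈ [I]∖{i_0}, and Σ_ℓ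 λ'_ℓ + Σ_j κ'_j ≥ Σ_ℓ λ_ℓ + Σ_j κ_j − 1. -/

import Mathlib

open Finset

/-- A polymatroid on a finite vertex type `V`. -/
def IsPolymatroid {V : Type*} [DecidableEq V] [Fintype V] (h : Finset V → ℝ) : Prop :=
  h ∅ = 0 ∧ (∀ A : Finset V, 0 ≤ h A) ∧
    (∀ A B : Finset V, A ⊆ B → h A ≤ h B) ∧
    (∀ A B : Finset V, h (A ∪ B) + h (A ∩ B) ≤ h A + h B)

/-- The conditional term `h(Y|X) = h(X ∪ Y) − h(X)`. -/
noncomputable def condH {V : Type*} [DecidableEq V]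
    (h : Finset V → ℝ) (Y X : Finset V) : ℝ :=
  h (X ∪ Y) - h X

/-- The conditional mutual-information term
`h(Y;Z|X) = h(X∪Y) + h(X∪Z) − h(X) − h(X∪Y∪Z)`. -/
noncomputable def condMI {V : Type*} [DecidableEq V]
    (h : Finset V → ℝ) (Y Z X : Finset V) : ℝ :=
  h (X ∪ Y) + h (X ∪ Z) - h X - h (X ∪ Y ∪ Z)

/-- An ω-dominant triple `(α, β, ζ)`. -/
def OmegaDominant (ω α β ζ : ℝ) : Prop :=
  1 ≤ α ∧ 1 ≤ β ∧ 0 ≤ ζ ∧ ω ≤ α + β + ζ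

/-- The left-hand side of an (integral) ω-Shannon inequality, with
natural-number coefficients. -/
noncomputable def ShannonLHS {V : Type*} [DecidableEq V] {L J : ℕ}
    (h : Finset V → ℝ) (U : Fin L → Finset V) (lam : Fin L → ℕ)
    (Xj Yj Zj Gj : Fin J → Finset V) (α β ζ κ : Fin J → ℕ) : ℝ :=
  (∑ ℓ, (lam ℓ : ℝ) * h (U ℓ)) +
    ∑ j, ((α j : ℝ) * condH h (Xj j) (Gj j) + (β j : ℝ) * condH h (Yj j) (Gj j) +
          (ζ j : ℝ) * condH h (Zj j) (Gj j) + (κ j : ℝ) * h (Gj j))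

/-- The right-hand side of an (integral) ω-Shannon inequality. -/
noncomputable def ShannonRHS {V : Type*} [DecidableEq V] {I : ℕ}
    (h : Finset V → ℝ) (Xi Yi : Fin I → Finset V) (w : Fin I → ℕ) : ℝ :=
  ∑ i, (w i : ℝ) * condH h (Yi i) (Xi i)

/-- The integrality certificate: the left-hand side equals the right-hand side
minus a nonnegative *integer* combination of monotonicity terms `h(Y_p|X_p)`
and submodularity terms `h(Y_q;Z_q|X_q)`, identically in every set function
`h` with `h(∅) = 0`. -/
def IntegralCert {V : Type*} [DecidableEq V] [Fintype V] {L J I : ℕ}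
    (U : Fin L → Finset V) (lam : Fin L → ℕ)
    (Xj Yj Zj Gj : Fin J → Finset V) (α β ζ κ : Fin J → ℕ)
    (Xi Yi : Fin I → Finset V) (w : Fin I → ℕ) : Prop :=
  ∃ (P Q : ℕ) (Xp Yp : Fin P → Finset V) (Xq Yq Zq : Fin Q → Finset V)
    (m : Fin P → ℕ) (s : Fin Q → ℕ),
    ∀ h : Finset V → ℝ, h ∅ = 0 →
      ShannonLHS h U lam Xj Yj Zj Gj α β ζ κ =
        ShannonRHS h Xi Yi w
          - (∑ p, (m p : ℝ) * condH h (Yp p) (Xp p))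
          - (∑ q, (s q : ℝ) * condMI h (Yq q) (Zq q) (Xq q))

namespace GRL

set_option linter.unusedSectionVars false

variable {V : Type*} [DecidableEq V] [Fintype V]

lemma condH_nonneg {h : Finset V → ℝ} (hp : IsPolymatroid h) (Y X : Finset V) :
    0 ≤ condH h Y X := by
  have := hp.2.2.1 X (X ∪ Y) Finset.subset_union_left
  simp only [condH]; linarith

lemma condMI_nonneg {h : Finset V → ℝ} (hp : IsPolymatroid h) (Y Z X : Finset V) :
    0 ≤ condMI h Y Z X := by
  obtain ⟨-, -, hmono, hsub⟩ := hp
  have h1 := hsub (X ∪ Y) (X ∪ Z)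
  have h2 : (X ∪ Y) ∪ (X ∪ Z) = X ∪ Y ∪ Z := by
    ext a; simp only [Finset.mem_union]; tauto
  have h3 : X ⊆ (X ∪ Y) ∩ (X ∪ Z) :=
    Finset.subset_inter Finset.subset_union_left Finset.subset_union_left
  have h4 := hmono _ _ h3
  rw [h2] at h1
  simp only [condMI]; linarith

/-! ### Multiset sums of monotonicity and submodularity terms -/

noncomputable def MSum (h : Finset V → ℝ) (M : Multiset (Finset V × Finset V)) : ℝ :=
  (M.map fun e => condH h e.2 e.1).sum

noncomputable def SSum (h : Finset V → ℝ) (S : Multiset (Finset V × Finset V × Finset V)) : ℝ :=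
  (S.map fun e => condMI h e.2.1 e.2.2 e.1).sum

@[simp] lemma MSum_zero (h : Finset V → ℝ) : MSum h 0 = 0 := rfl

@[simp] lemma SSum_zero (h : Finset V → ℝ) : SSum h 0 = 0 := rfl

@[simp] lemma MSum_cons (h : Finset V → ℝ) (e : Finset V × Finset V) (M) :
    MSum h (e ::ₘ M) = condH h e.2 e.1 + MSum h M := by
  simp [MSum]

@[simp] lemma SSum_cons (h : Finset V → ℝ) (e : Finset V × Finset V × Finset V) (S) :
    SSum h (e ::ₘ S) = condMI h e.2.1 e.2.2 e.1 + SSum h S := by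
  simp [SSum]

@[simp] lemma MSum_add (h : Finset V → ℝ) (M N : Multiset (Finset V × Finset V)) :
    MSum h (M + N) = MSum h M + MSum h N := by
  simp [MSum]

lemma MSum_replicate (h : Finset V → ℝ) (n : ℕ) (e : Finset V × Finset V) :
    MSum h (Multiset.replicate n e) = (n : ℝ) * condH h e.2 e.1 := by
  simp [MSum, Multiset.map_replicate, Multiset.sum_replicate, nsmul_eq_mul]

lemma map_sum_nonpos {γ : Type*} (M : Multiset γ) (f : γ → ℝ)
    (h : ∀ e ∈ M, f e ≤ 0) : (M.map f).sum ≤ 0 := by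
  induction M using Multiset.induction with
  | empty => simp
  | cons a M ih =>
      simp only [Multiset.map_cons, Multiset.sum_cons]
      exact add_nonpos (h a (Multiset.mem_cons_self a M))
        (ih fun e he => h e (Multiset.mem_cons_of_mem he))

/-! ### sum splitting helpers -/

lemma sum_split {n : ℕ} (f g : Fin n → ℝ) (j₀ : Fin n) (hfg : ∀ j, j ≠ j₀ → f j = g j) :
    ∑ j, f j = (∑ j, g j) - g j₀ + f j₀ := by
  have h1 := Finset.add_sum_erase Finset.univ f (Finset.mem_univ j₀)
  have h2 := Finset.add_sum_erase Finset.univ g (Finset.mem_univ j₀)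
  have h3 : ∑ j ∈ Finset.univ.erase j₀, f j = ∑ j ∈ Finset.univ.erase j₀, g j :=
    Finset.sum_congr rfl fun j hj => hfg j (Finset.mem_erase.mp hj).1
  linarith

lemma sum_split_nat {n : ℕ} (f g : Fin n → ℕ) (j₀ : Fin n) (hfg : ∀ j, j ≠ j₀ → f j = g j) :
    (∑ j, f j) + g j₀ = (∑ j, g j) + f j₀ := by
  have h1 := Finset.add_sum_erase Finset.univ f (Finset.mem_univ j₀)
  have h2 := Finset.add_sum_erase Finset.univ g (Finset.mem_univ j₀)
  have h3 : ∑ j ∈ Finset.univ.erase j₀, f j = ∑ j ∈ Finset.univ.erase j₀, g j :=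
    Finset.sum_congr rfl fun j hj => hfg j (Finset.mem_erase.mp hj).1
  omega

/-! ### dominance helpers -/

lemma dom_unpack {ω a b z k : ℝ} (hk : 0 < k)
    (h : OmegaDominant ω (a / k) (b / k) (z / k)) :
    k ≤ a ∧ k ≤ b ∧ 0 ≤ z ∧ ω * k ≤ a + b + z := by
  obtain ⟨h1, h2, h3, h4⟩ := h
  refine ⟨(one_le_div hk).mp h1, (one_le_div hk).mp h2, ?_, ?_⟩
  · have := mul_le_mul_of_nonneg_right h3 hk.le
    rwa [zero_mul, div_mul_cancel₀ _ hk.ne'] at this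
  · have := mul_le_mul_of_nonneg_right h4 hk.le
    calc ω * k ≤ (a / k + b / k + z / k) * k := this
    _ = a + b + z := by field_simp

lemma dom_pack {ω a b z k : ℝ} (hk : 0 < k) (ha : k ≤ a) (hb : k ≤ b) (hz : 0 ≤ z)
    (hs : ω * k ≤ a + b + z) : OmegaDominant ω (a / k) (b / k) (z / k) := by
  refine ⟨(one_le_div hk).mpr ha, (one_le_div hk).mpr hb, div_nonneg hz hk.le, ?_⟩
  rw [← add_div, ← add_div, le_div_iff₀ hk]
  linarith

lemma dom_dec {ω : ℝ} (hω : 1 ≤ ω) (a b z k da db dz : ℕ) (hk : 2 ≤ k)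
    (hda : da ≤ 1) (hdb : db ≤ 1) (hdzz : dz ≤ z) (hdz : dz ≤ 1)
    (hsum : da + db + dz ≤ 1)
    (h : OmegaDominant ω ((a : ℝ) / (k : ℝ)) ((b : ℝ) / (k : ℝ)) ((z : ℝ) / (k : ℝ))) :
    OmegaDominant ω (((a - da : ℕ) : ℝ) / (((k - 1 : ℕ) : ℝ)))
      (((b - db : ℕ) : ℝ) / (((k - 1 : ℕ) : ℝ)))
      (((z - dz : ℕ) : ℝ) / (((k - 1 : ℕ) : ℝ))) := by
  have hk0 : (0 : ℝ) < (k : ℝ) := by exact_mod_cast Nat.lt_of_lt_of_le Nat.zero_lt_two hk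
  obtain ⟨ha, hb, hz, hs⟩ := dom_unpack hk0 h
  have hka : k ≤ a := by exact_mod_cast ha
  have hkb : k ≤ b := by exact_mod_cast hb
  have hc1 : ((a - da : ℕ) : ℝ) = (a : ℝ) - da := by
    rw [Nat.cast_sub (by omega)]
  have hc2 : ((b - db : ℕ) : ℝ) = (b : ℝ) - db := by
    rw [Nat.cast_sub (by omega)]
  have hc3 : ((z - dz : ℕ) : ℝ) = (z : ℝ) - dz := by
    rw [Nat.cast_sub hdzz]
  have hc4 : ((k - 1 : ℕ) : ℝ) = (k : ℝ) - 1 := by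
    rw [Nat.cast_sub (by omega)]; norm_num
  rw [hc1, hc2, hc3, hc4]
  have hk1 : (0 : ℝ) < (k : ℝ) - 1 := by
    have : (2 : ℝ) ≤ (k : ℝ) := by exact_mod_cast hk
    linarith
  have hda' : (da : ℝ) ≤ 1 := by exact_mod_cast hda
  have hdb' : (db : ℝ) ≤ 1 := by exact_mod_cast hdb
  have hdz' : (dz : ℝ) ≤ 0 + dz := by linarith
  have hdzz' : (dz : ℝ) ≤ (z : ℝ) := by exact_mod_cast hdzz
  have hsum' : (da : ℝ) + db + dz ≤ 1 := by exact_mod_cast hsum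
  refine dom_pack hk1 (by linarith) (by linarith) (by linarith) ?_
  nlinarith [hs, hω, hk1]

end GRL
namespace GRL

set_option linter.unusedSectionVars false

variable {V : Type*} [DecidableEq V] [Fintype V]

/-! ### chains of monotonicity edges -/

def chainOK : Finset V → List (Finset V × Finset V) → Prop
  | _, [] => True
  | C, e :: l => C ⊆ e.1 ∪ e.2 ∧ chainOK e.1 l

def lastD (C : Finset V) : List (Finset V × Finset V) → Finset V
  | [] => C
  | e :: l => lastD e.1 l

def newOf (C : Finset V) : List (Finset V × Finset V) → List (Finset V × Finset V)
  | [] => []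
  | e :: l => (C, e.1 ∪ e.2) :: newOf e.1 l

@[simp] lemma lastD_nil (C : Finset V) : lastD C [] = C := rfl
@[simp] lemma lastD_cons (C : Finset V) (e) (l) : lastD C (e :: l) = lastD e.1 l := rfl

lemma lastD_append (a b : List (Finset V × Finset V)) (C : Finset V) :
    lastD C (a ++ b) = lastD (lastD C a) b := by
  induction a generalizing C with
  | nil => rfl
  | cons e t ih => simp [lastD, ih]

lemma chain_append {a b : List (Finset V × Finset V)} {C : Finset V}
    (h : chainOK C (a ++ b)) : chainOK (lastD C a) b := by
  induction a generalizing C with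
  | nil => exact h
  | cons e t ih => exact ih h.2

lemma telescope (h : Finset V → ℝ) :
    ∀ (l : List (Finset V × Finset V)) (C : Finset V), chainOK C l →
      h C = ((l.map fun e => condH h e.2 e.1).sum)
            - (((newOf C l).map fun e => condH h e.2 e.1).sum) + h (lastD C l)
  | [], C, _ => by simp [newOf]
  | e :: l, C, hc => by
      obtain ⟨h1, h2⟩ := hc
      have ih := telescope h l e.1 h2
      simp only [newOf, List.map_cons, List.sum_cons, lastD_cons]
      have he : h (C ∪ (e.1 ∪ e.2)) = h (e.1 ∪ e.2) := by
        rw [Finset.union_eq_right.mpr h1]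
      simp only [condH] at *
      linarith

/-! ### reachability -/

inductive MReach (M : Multiset (Finset V × Finset V)) (T : Finset V → Prop) :
    Finset V → Prop
  | base {C : Finset V} : T C → MReach M T C
  | step {C : Finset V} (e : Finset V × Finset V) :
      e ∈ M → C ⊆ e.1 ∪ e.2 → MReach M T e.1 → MReach M T C

lemma mreach_mono {M : Multiset (Finset V × Finset V)} {T : Finset V → Prop}
    (hT : ∀ A B : Finset V, A ⊆ B → T B → T A) {A B : Finset V} (hAB : A ⊆ B)
    (h : MReach M T B) : MReach M T A := by
  induction h with
  | base hTB => exact MReach.base (hT _ _ hAB hTB)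
  | step e heM hsub hX ih => exact MReach.step e heM (hAB.trans hsub) hX

lemma exists_chain {M : Multiset (Finset V × Finset V)} {T : Finset V → Prop}
    {C : Finset V} (h : MReach M T C) :
    ∃ l : List (Finset V × Finset V), (∀ e ∈ l, e ∈ M) ∧ chainOK C l ∧ T (lastD C l) := by
  induction h with
  | base hT => exact ⟨[], by simp, trivial, hT⟩
  | step e heM hsub _ ih =>
      obtain ⟨l, hlM, hgc, hT⟩ := ih
      refine ⟨e :: l, ?_, ⟨hsub, hgc⟩, hT⟩
      intro e' he'
      rcases List.mem_cons.mp he' with rfl | h'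
      · exact heM
      · exact hlM e' h'

lemma chain_dedup : ∀ (n : ℕ) (l : List (Finset V × Finset V)) (C : Finset V),
    l.length ≤ n → chainOK C l →
    ∃ l', l'.Nodup ∧ l' ⊆ l ∧ chainOK C l' ∧ lastD C l' = lastD C l := by
  intro n
  induction n with
  | zero =>
      intro l C hl _
      have : l = [] := List.length_eq_zero_iff.mp (Nat.le_zero.mp hl)
      subst this
      exact ⟨[], by simp, by simp, trivial, rfl⟩
  | succ n ih =>
      intro l C hl hgc
      match l, hl, hgc with
      | [], _, _ => exact ⟨[], by simp, by simp, trivial, rfl⟩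
      | e :: t, hl, hgc =>
        by_cases he : e ∈ t
        · obtain ⟨t₁, t₂, rfl⟩ := List.append_of_mem he
          obtain ⟨h1, h2⟩ := hgc
          have h3 : chainOK (lastD e.1 t₁) (e :: t₂) := chain_append h2
          have h4 : chainOK C (e :: t₂) := ⟨h1, h3.2⟩
          have hlen : (e :: t₂).length ≤ n := by
            simp only [List.length_cons, List.length_append] at hl ⊢
            omega
          obtain ⟨l', hnd, hsub, hgc', hlast⟩ := ih (e :: t₂) C hlen h4
          refine ⟨l', hnd, ?_, hgc', ?_⟩
          · intro x hx
            have := hsub hx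
            simp only [List.mem_cons, List.mem_append] at this ⊢
            tauto
          · rw [hlast]
            show lastD C (e :: t₂) = lastD C (e :: (t₁ ++ e :: t₂))
            simp only [lastD_cons, lastD_append]
        · obtain ⟨h1, h2⟩ := hgc
          have hlen : t.length ≤ n := by
            simp only [List.length_cons] at hl; omega
          obtain ⟨t', hnd, hsub, hgc', hlast⟩ := ih t e.1 hlen h2
          refine ⟨e :: t', List.nodup_cons.mpr ⟨fun hmem => he (hsub hmem), hnd⟩, ?_,
            ⟨h1, hgc'⟩, by simpa using hlast⟩
          intro x hx
          rcases List.mem_cons.mp hx with rfl | h'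
          · exact List.mem_cons_self
          · exact List.mem_cons_of_mem _ (hsub h')

lemma coe_le_of_nodup : ∀ (l : List (Finset V × Finset V)) (M : Multiset (Finset V × Finset V)),
    l.Nodup → (∀ e ∈ l, e ∈ M) → (l : Multiset (Finset V × Finset V)) ≤ M
  | [], M, _, _ => by simp
  | e :: t, M, hnd, h => by
      have he : e ∈ M := h e List.mem_cons_self
      have hnd' := List.nodup_cons.mp hnd
      have ht : ∀ x ∈ t, x ∈ M.erase e := by
        intro x hx
        exact (Multiset.mem_erase_of_ne (fun (hxe : x = e) => hnd'.1 (by rwa [hxe] at hx))).mpr (h x (List.mem_cons_of_mem _ hx))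
      have := coe_le_of_nodup t (M.erase e) hnd'.2 ht
      calc ((e :: t : List (Finset V × Finset V)) : Multiset (Finset V × Finset V))
          = e ::ₘ (t : Multiset (Finset V × Finset V)) := by simp
        _ ≤ e ::ₘ M.erase e := Multiset.cons_le_cons e this
        _ = M := Multiset.cons_erase he

lemma MSum_coe (h : Finset V → ℝ) (l : List (Finset V × Finset V)) :
    MSum h (↑l) = (l.map fun e => condH h e.2 e.1).sum := by
  simp [MSum]

/-! ### the enumeration lemma -/

lemma exists_fin_enum {γ : Type*} (M : Multiset γ) :
    ∃ (P : ℕ) (g : Fin P → γ), ∀ (f : γ → ℝ), (M.map f).sum = ∑ p, f (g p) := by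
  induction M using Multiset.induction with
  | empty => exact ⟨0, Fin.elim0, by simp⟩
  | cons a M ih =>
      obtain ⟨P, g, hg⟩ := ih
      refine ⟨P + 1, Fin.cons a g, fun f => ?_⟩
      rw [Multiset.map_cons, Multiset.sum_cons, Fin.sum_univ_succ]
      simp [hg f]

lemma msum_of_fin {γ : Type*} {P : ℕ} (g : Fin P → γ) (m : Fin P → ℕ) (f : γ → ℝ) :
    (((∑ p, Multiset.replicate (m p) (g p)).map f)).sum = ∑ p, (m p : ℝ) * f (g p) := by
  classical
  rw [show (∑ p, Multiset.replicate (m p) (g p)) = ∑ p ∈ Finset.univ, Multiset.replicate (m p) (g p) from rfl]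
  induction (Finset.univ : Finset (Fin P)) using Finset.induction with
  | empty => simp
  | insert a s hnot ih =>
      rw [Finset.sum_insert hnot, Finset.sum_insert hnot, Multiset.map_add, Multiset.sum_add,
        Multiset.map_replicate, Multiset.sum_replicate, nsmul_eq_mul, ih]

end GRL
namespace GRL

set_option linter.unusedSectionVars false

variable {V : Type*} [DecidableEq V] [Fintype V]

/-- Terminal debts. -/
def TermP {L J : ℕ} (U : Fin L → Finset V) (lam : Fin L → ℕ)
    (Xj Yj Zj Gj : Fin J → Finset V) (α β ζ κ : Fin J → ℕ)
    (S : Multiset (Finset V × Finset V × Finset V)) (D : Finset V) : Prop :=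
  D = ∅ ∨ (∃ ℓ, 0 < lam ℓ ∧ D ⊆ U ℓ) ∨
    (∃ j, 0 < κ j ∧ D ⊆ Gj j) ∨
    (∃ j, 0 < κ j ∧ 0 < α j ∧ D ⊆ Gj j ∪ Xj j) ∨
    (∃ j, 0 < κ j ∧ 0 < β j ∧ D ⊆ Gj j ∪ Yj j) ∨
    (∃ j, 0 < κ j ∧ 0 < ζ j ∧ D ⊆ Gj j ∪ Zj j) ∨
    (∃ e ∈ S, D ⊆ e.1 ∪ e.2.1 ∨ D ⊆ e.1 ∪ e.2.2)

lemma termP_mono {L J : ℕ} {U : Fin L → Finset V} {lam : Fin L → ℕ}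
    {Xj Yj Zj Gj : Fin J → Finset V} {α β ζ κ : Fin J → ℕ}
    {S : Multiset (Finset V × Finset V × Finset V)} :
    ∀ A B : Finset V, A ⊆ B → TermP U lam Xj Yj Zj Gj α β ζ κ S B →
      TermP U lam Xj Yj Zj Gj α β ζ κ S A := by
  intro A B hAB hB
  rcases hB with h | ⟨ℓ, h1, h2⟩ | ⟨j, h1, h2⟩ | ⟨j, h1, h2, h3⟩ | ⟨j, h1, h2, h3⟩ |
    ⟨j, h1, h2, h3⟩ | ⟨e, h1, h2⟩
  · exact Or.inl (Finset.subset_empty.mp (h ▸ hAB))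
  · exact Or.inr (Or.inl ⟨ℓ, h1, hAB.trans h2⟩)
  · exact Or.inr (Or.inr (Or.inl ⟨j, h1, hAB.trans h2⟩))
  · exact Or.inr (Or.inr (Or.inr (Or.inl ⟨j, h1, h2, hAB.trans h3⟩)))
  · exact Or.inr (Or.inr (Or.inr (Or.inr (Or.inl ⟨j, h1, h2, hAB.trans h3⟩))))
  · exact Or.inr (Or.inr (Or.inr (Or.inr (Or.inr (Or.inl ⟨j, h1, h2, hAB.trans h3⟩)))))
  · refine Or.inr (Or.inr (Or.inr (Or.inr (Or.inr (Or.inr ⟨e, h1, ?_⟩)))))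
    rcases h2 with h2 | h2
    · exact Or.inl (hAB.trans h2)
    · exact Or.inr (hAB.trans h2)

/-- The running state invariant: the identity with a pending debt `h C`. -/
def StInv {L J I : ℕ} (U : Fin L → Finset V) (lam : Fin L → ℕ)
    (Xj Yj Zj Gj : Fin J → Finset V) (α β ζ κ : Fin J → ℕ)
    (Xi Yi : Fin I → Finset V) (w : Fin I → ℕ) (i₀ : Fin I)
    (M : Multiset (Finset V × Finset V)) (S : Multiset (Finset V × Finset V × Finset V))
    (C : Finset V) : Prop :=
  ∀ h : Finset V → ℝ, h ∅ = 0 →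
    ShannonLHS h U lam Xj Yj Zj Gj α β ζ κ + MSum h M + SSum h S =
      ShannonRHS h Xi Yi w - condH h (Yi i₀) (Xi i₀) + h C

/-- The final identity (no pending debt). -/
def FinInv {L J I : ℕ} (U : Fin L → Finset V) (lam : Fin L → ℕ)
    (Xj Yj Zj Gj : Fin J → Finset V) (α β ζ κ : Fin J → ℕ)
    (Xi Yi : Fin I → Finset V) (w : Fin I → ℕ) (i₀ : Fin I)
    (M : Multiset (Finset V × Finset V)) (S : Multiset (Finset V × Finset V × Finset V)) :
    Prop :=
  ∀ h : Finset V → ℝ, h ∅ = 0 →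
    ShannonLHS h U lam Xj Yj Zj Gj α β ζ κ + MSum h M + SSum h S =
      ShannonRHS h Xi Yi w - condH h (Yi i₀) (Xi i₀)

/-- Blocks are dominant or zero. -/
def BInv (ω : ℝ) {J : ℕ} (α β ζ κ : Fin J → ℕ) : Prop :=
  ∀ j, (0 < κ j ∧ OmegaDominant ω ((α j : ℝ) / (κ j : ℝ)) ((β j : ℝ) / (κ j : ℝ))
      ((ζ j : ℝ) / (κ j : ℝ))) ∨
    (α j = 0 ∧ β j = 0 ∧ ζ j = 0 ∧ κ j = 0)

lemma reach_of_inv {L J I : ℕ} {ω : ℝ}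
    (U : Fin L → Finset V) (lam : Fin L → ℕ) (Xj Yj Zj Gj : Fin J → Finset V)
    (α β ζ κ : Fin J → ℕ) (Xi Yi : Fin I → Finset V) (w : Fin I → ℕ) (i₀ : Fin I)
    (hX₀ : Xi i₀ = ∅) (hw₀ : 0 < w i₀)
    (M : Multiset (Finset V × Finset V)) (S : Multiset (Finset V × Finset V × Finset V))
    (C : Finset V) (hB : BInv ω α β ζ κ)
    (hid : StInv U lam Xj Yj Zj Gj α β ζ κ Xi Yi w i₀ M S C) :
    MReach M (TermP U lam Xj Yj Zj Gj α β ζ κ S) C := by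
  classical
  by_contra hC
  set T := TermP U lam Xj Yj Zj Gj α β ζ κ S with hTdef
  set u : Finset V → ℝ := fun A => if MReach M T A then 0 else 1 with hu
  have hu0 : ∀ A, MReach M T A → u A = 0 := fun A h => if_pos h
  have hu1 : ∀ A, ¬ MReach M T A → u A = 1 := fun A h => if_neg h
  have hunn : ∀ A, 0 ≤ u A := by
    intro A; by_cases h : MReach M T A <;> simp [hu, h]
  have hule : ∀ A, u A ≤ 1 := by
    intro A; by_cases h : MReach M T A <;> simp [hu, h]
  have humono : ∀ A B : Finset V, A ⊆ B → u A ≤ u B := by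
    intro A B hAB
    by_cases h : MReach M T A
    · rw [hu0 A h]; exact hunn B
    · rw [hu1 A h, hu1 B (fun hB' => h (mreach_mono termP_mono hAB hB'))]
  have hempty : u ∅ = 0 := hu0 _ (MReach.base (Or.inl rfl))
  have hkey := hid u hempty
  -- left side vanishes / is nonpositive
  have hLHS0 : ShannonLHS u U lam Xj Yj Zj Gj α β ζ κ = 0 := by
    unfold ShannonLHS
    rw [Finset.sum_eq_zero, Finset.sum_eq_zero, add_zero]
    · intro j _
      rcases hB j with ⟨hk, -⟩ | ⟨ha, hb, hz, hkk⟩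
      · have hG : u (Gj j) = 0 :=
          hu0 _ (MReach.base (Or.inr (Or.inr (Or.inl ⟨j, hk, Finset.Subset.refl _⟩))))
        have hα : (α j : ℝ) * condH u (Xj j) (Gj j) = 0 := by
          rcases Nat.eq_zero_or_pos (α j) with h | h
          · simp [h]
          · have hGX : u (Gj j ∪ Xj j) = 0 :=
              hu0 _ (MReach.base (Or.inr (Or.inr (Or.inr (Or.inl
                ⟨j, hk, h, Finset.Subset.refl _⟩)))))
            simp [condH, hGX, hG]
        have hβ : (β j : ℝ) * condH u (Yj j) (Gj j) = 0 := by
          rcases Nat.eq_zero_or_pos (β j) with h | h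
          · simp [h]
          · have hGY : u (Gj j ∪ Yj j) = 0 :=
              hu0 _ (MReach.base (Or.inr (Or.inr (Or.inr (Or.inr (Or.inl
                ⟨j, hk, h, Finset.Subset.refl _⟩))))))
            simp [condH, hGY, hG]
        have hζ : (ζ j : ℝ) * condH u (Zj j) (Gj j) = 0 := by
          rcases Nat.eq_zero_or_pos (ζ j) with h | h
          · simp [h]
          · have hGZ : u (Gj j ∪ Zj j) = 0 :=
              hu0 _ (MReach.base (Or.inr (Or.inr (Or.inr (Or.inr (Or.inr (Or.inl
                ⟨j, hk, h, Finset.Subset.refl _⟩)))))))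
            simp [condH, hGZ, hG]
        rw [hα, hβ, hζ, hG]; ring
      · simp [ha, hb, hz, hkk]
    · intro ℓ _
      rcases Nat.eq_zero_or_pos (lam ℓ) with h | h
      · simp [h]
      · rw [hu0 _ (MReach.base (Or.inr (Or.inl ⟨ℓ, h, Finset.Subset.refl _⟩)))]; ring
  have hMle : MSum u M ≤ 0 := by
    apply map_sum_nonpos
    intro e he
    by_cases hR : MReach M T e.1
    · have h2 : MReach M T (e.1 ∪ e.2) := MReach.step e he (Finset.Subset.refl _) hR
      simp [condH, hu0 _ h2, hu0 _ hR]
    · simp only [condH]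
      have h1 := hule (e.1 ∪ e.2)
      have h2 := hu1 _ hR
      linarith
  have hSle : SSum u S ≤ 0 := by
    apply map_sum_nonpos
    intro e he
    have h1 : u (e.1 ∪ e.2.1) = 0 :=
      hu0 _ (MReach.base (Or.inr (Or.inr (Or.inr (Or.inr (Or.inr (Or.inr
        ⟨e, he, Or.inl (Finset.Subset.refl _)⟩)))))))
    have h2 : u (e.1 ∪ e.2.2) = 0 :=
      hu0 _ (MReach.base (Or.inr (Or.inr (Or.inr (Or.inr (Or.inr (Or.inr
        ⟨e, he, Or.inr (Finset.Subset.refl _)⟩)))))))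
    have h3 : u e.1 = 0 :=
      le_antisymm (by rw [← h1]; exact humono _ _ Finset.subset_union_left) (hunn _)
    have h4 := hunn (e.1 ∪ e.2.1 ∪ e.2.2)
    simp only [condMI, h1, h2, h3]
    linarith
  have hRge : (w i₀ : ℝ) * condH u (Yi i₀) (Xi i₀) ≤ ShannonRHS u Xi Yi w := by
    unfold ShannonRHS
    refine Finset.single_le_sum (f := fun i => (w i : ℝ) * condH u (Yi i) (Xi i)) ?_
      (Finset.mem_univ i₀)
    intro i _
    refine mul_nonneg (Nat.cast_nonneg _) ?_
    have := humono (Xi i) (Xi i ∪ Yi i) Finset.subset_union_left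
    simp only [condH]; linarith
  have hCu : u C = 1 := hu1 _ hC
  have hcH : 0 ≤ condH u (Yi i₀) (Xi i₀) := by
    have := humono (Xi i₀) (Xi i₀ ∪ Yi i₀) Finset.subset_union_left
    simp only [condH]; linarith
  have hw1 : (1 : ℝ) ≤ (w i₀ : ℝ) := by exact_mod_cast hw₀
  have haux : 0 ≤ ((w i₀ : ℝ) - 1) * condH u (Yi i₀) (Xi i₀) :=
    mul_nonneg (by linarith) hcH
  rw [hLHS0, hCu] at hkey
  nlinarith [hkey, hMle, hSle, hRge]

end GRL
namespace GRL

set_option linter.unusedSectionVars false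
set_option maxHeartbeats 1000000

variable {V : Type*} [DecidableEq V] [Fintype V]

lemma block_case {L J I : ℕ} {ω : ℝ} (hω : 1 ≤ ω)
    (U : Fin L → Finset V) (lam : Fin L → ℕ) (Xj Yj Zj Gj : Fin J → Finset V)
    (α β ζ κ : Fin J → ℕ) (Xi Yi : Fin I → Finset V) (w : Fin I → ℕ) (i₀ : Fin I)
    (M₂ : Multiset (Finset V × Finset V)) (S : Multiset (Finset V × Finset V × Finset V))
    (D : Finset V) (j₀ : Fin J) (da db dz : ℕ)
    (hda : da ≤ α j₀) (hdb : db ≤ β j₀) (hdz : dz ≤ ζ j₀)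
    (hda1 : da ≤ 1) (hdb1 : db ≤ 1) (hdz1 : dz ≤ 1) (hsum1 : da + db + dz ≤ 1)
    (hk : 0 < κ j₀) (T₀ : Finset V) (hsubT : D ⊆ T₀)
    (hT₀ : ∀ h : Finset V → ℝ,
      (da : ℝ) * condH h (Xj j₀) (Gj j₀) + (db : ℝ) * condH h (Yj j₀) (Gj j₀) +
        (dz : ℝ) * condH h (Zj j₀) (Gj j₀) + h (Gj j₀) = h T₀)
    (hB : BInv ω α β ζ κ)
    (hstar : StInv U lam Xj Yj Zj Gj α β ζ κ Xi Yi w i₀ M₂ S D) :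
    ∃ (α' β' ζ' κ' : Fin J → ℕ) (M' : Multiset (Finset V × Finset V)),
      BInv ω α' β' ζ' κ' ∧ FinInv U lam Xj Yj Zj Gj α' β' ζ' κ' Xi Yi w i₀ M' S ∧
      (∑ j, κ j) = (∑ j, κ' j) + 1 := by
  classical
  have hdom₀ : OmegaDominant ω ((α j₀ : ℝ) / (κ j₀ : ℝ)) ((β j₀ : ℝ) / (κ j₀ : ℝ))
      ((ζ j₀ : ℝ) / (κ j₀ : ℝ)) := by
    rcases hB j₀ with ⟨-, hd⟩ | ⟨-, -, -, hk0⟩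
    · exact hd
    · omega
  have hDT : ∀ h : Finset V → ℝ, condH h T₀ D = h T₀ - h D := by
    intro h; simp only [condH]; rw [Finset.union_eq_right.mpr hsubT]
  rcases Nat.lt_or_ge (κ j₀) 2 with hk2 | hk2
  · -- κ j₀ = 1 : the block is zeroed out
    have hk1 : κ j₀ = 1 := by omega
    refine ⟨Function.update α j₀ 0, Function.update β j₀ 0, Function.update ζ j₀ 0,
      Function.update κ j₀ 0,
      (D, T₀) ::ₘ (Multiset.replicate (α j₀ - da) (Gj j₀, Xj j₀) +
        Multiset.replicate (β j₀ - db) (Gj j₀, Yj j₀) +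
        Multiset.replicate (ζ j₀ - dz) (Gj j₀, Zj j₀) + M₂), ?_, ?_, ?_⟩
    · intro j
      by_cases hj : j = j₀
      · subst hj; right; simp
      · rcases hB j with hc | hc
        · left; simpa [Function.update_of_ne hj] using hc
        · right; simpa [Function.update_of_ne hj] using hc
    · intro h h0
      have hs := hstar h h0
      have hT := hT₀ h
      have e1 : (∑ j, ((Function.update α j₀ 0 j : ℝ) * condH h (Xj j) (Gj j) +
            (Function.update β j₀ 0 j : ℝ) * condH h (Yj j) (Gj j) +
            (Function.update ζ j₀ 0 j : ℝ) * condH h (Zj j) (Gj j) +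
            (Function.update κ j₀ 0 j : ℝ) * h (Gj j))) =
          (∑ j, ((α j : ℝ) * condH h (Xj j) (Gj j) + (β j : ℝ) * condH h (Yj j) (Gj j) +
            (ζ j : ℝ) * condH h (Zj j) (Gj j) + (κ j : ℝ) * h (Gj j))) -
          ((α j₀ : ℝ) * condH h (Xj j₀) (Gj j₀) + (β j₀ : ℝ) * condH h (Yj j₀) (Gj j₀) +
            (ζ j₀ : ℝ) * condH h (Zj j₀) (Gj j₀) + (κ j₀ : ℝ) * h (Gj j₀)) := by
        have := sum_split
          (fun j => ((Function.update α j₀ 0 j : ℝ) * condH h (Xj j) (Gj j) +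
            (Function.update β j₀ 0 j : ℝ) * condH h (Yj j) (Gj j) +
            (Function.update ζ j₀ 0 j : ℝ) * condH h (Zj j) (Gj j) +
            (Function.update κ j₀ 0 j : ℝ) * h (Gj j)))
          (fun j => ((α j : ℝ) * condH h (Xj j) (Gj j) + (β j : ℝ) * condH h (Yj j) (Gj j) +
            (ζ j : ℝ) * condH h (Zj j) (Gj j) + (κ j : ℝ) * h (Gj j))) j₀
          (fun j hj => by simp [Function.update_of_ne hj])
        simpa using this
      have hca : ((α j₀ - da : ℕ) : ℝ) * condH h (Xj j₀) (Gj j₀) =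
          (α j₀ : ℝ) * condH h (Xj j₀) (Gj j₀) - (da : ℝ) * condH h (Xj j₀) (Gj j₀) := by
        rw [Nat.cast_sub hda]; ring
      have hcb : ((β j₀ - db : ℕ) : ℝ) * condH h (Yj j₀) (Gj j₀) =
          (β j₀ : ℝ) * condH h (Yj j₀) (Gj j₀) - (db : ℝ) * condH h (Yj j₀) (Gj j₀) := by
        rw [Nat.cast_sub hdb]; ring
      have hcz : ((ζ j₀ - dz : ℕ) : ℝ) * condH h (Zj j₀) (Gj j₀) =
          (ζ j₀ : ℝ) * condH h (Zj j₀) (Gj j₀) - (dz : ℝ) * condH h (Zj j₀) (Gj j₀) := by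
        rw [Nat.cast_sub hdz]; ring
      have hk1' : (κ j₀ : ℝ) * h (Gj j₀) = h (Gj j₀) := by rw [hk1]; norm_num
      simp only [ShannonLHS] at hs ⊢
      rw [e1, MSum_cons, MSum_add, MSum_add, MSum_add, MSum_replicate, MSum_replicate,
        MSum_replicate, hDT h]
      dsimp only
      linarith [hs, hT, hca, hcb, hcz, hk1']
    · have := sum_split_nat (Function.update κ j₀ 0) κ j₀
        (fun j hj => Function.update_of_ne hj _ _)
      rw [Function.update_self] at this
      omega
  · -- κ j₀ ≥ 2 : decrement the block
    refine ⟨Function.update α j₀ (α j₀ - da), Function.update β j₀ (β j₀ - db),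
      Function.update ζ j₀ (ζ j₀ - dz), Function.update κ j₀ (κ j₀ - 1),
      (D, T₀) ::ₘ M₂, ?_, ?_, ?_⟩
    · intro j
      by_cases hj : j = j₀
      · subst hj
        left
        constructor
        · simp only [Function.update_self]; omega
        · simp only [Function.update_self]
          exact dom_dec hω _ _ _ _ _ _ _ hk2 hda1 hdb1 hdz hdz1 hsum1 hdom₀
      · rcases hB j with hc | hc
        · left; simpa [Function.update_of_ne hj] using hc
        · right; simpa [Function.update_of_ne hj] using hc
    · intro h h0
      have hs := hstar h h0
      have hT := hT₀ h
      have e1 := sum_split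
        (fun j => ((Function.update α j₀ (α j₀ - da) j : ℝ) * condH h (Xj j) (Gj j) +
          (Function.update β j₀ (β j₀ - db) j : ℝ) * condH h (Yj j) (Gj j) +
          (Function.update ζ j₀ (ζ j₀ - dz) j : ℝ) * condH h (Zj j) (Gj j) +
          (Function.update κ j₀ (κ j₀ - 1) j : ℝ) * h (Gj j)))
        (fun j => ((α j : ℝ) * condH h (Xj j) (Gj j) + (β j : ℝ) * condH h (Yj j) (Gj j) +
          (ζ j : ℝ) * condH h (Zj j) (Gj j) + (κ j : ℝ) * h (Gj j))) j₀
        (fun j hj => by simp [Function.update_of_ne hj])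
      simp only [Function.update_self] at e1
      have hca : ((α j₀ - da : ℕ) : ℝ) * condH h (Xj j₀) (Gj j₀) =
          (α j₀ : ℝ) * condH h (Xj j₀) (Gj j₀) - (da : ℝ) * condH h (Xj j₀) (Gj j₀) := by
        rw [Nat.cast_sub hda]; ring
      have hcb : ((β j₀ - db : ℕ) : ℝ) * condH h (Yj j₀) (Gj j₀) =
          (β j₀ : ℝ) * condH h (Yj j₀) (Gj j₀) - (db : ℝ) * condH h (Yj j₀) (Gj j₀) := by
        rw [Nat.cast_sub hdb]; ring
      have hcz : ((ζ j₀ - dz : ℕ) : ℝ) * condH h (Zj j₀) (Gj j₀) =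
          (ζ j₀ : ℝ) * condH h (Zj j₀) (Gj j₀) - (dz : ℝ) * condH h (Zj j₀) (Gj j₀) := by
        rw [Nat.cast_sub hdz]; ring
      have hck : ((κ j₀ - 1 : ℕ) : ℝ) * h (Gj j₀) = (κ j₀ : ℝ) * h (Gj j₀) - h (Gj j₀) := by
        rw [Nat.cast_sub (by omega : 1 ≤ κ j₀)]; ring
      simp only [ShannonLHS] at hs ⊢
      rw [e1, MSum_cons, hDT h]
      linarith [hs, hT, hca, hcb, hcz, hck]
    · have := sum_split_nat (Function.update κ j₀ (κ j₀ - 1)) κ j₀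
        (fun j hj => Function.update_of_ne hj _ _)
      rw [Function.update_self] at this
      omega

end GRL
namespace GRL

set_option linter.unusedSectionVars false
set_option maxHeartbeats 1000000

variable {V : Type*} [DecidableEq V] [Fintype V]

lemma step_or_recurse {L J I : ℕ} {ω : ℝ} (hω : 1 ≤ ω)
    (U : Fin L → Finset V) (lam : Fin L → ℕ) (Xj Yj Zj Gj : Fin J → Finset V)
    (α β ζ κ : Fin J → ℕ) (Xi Yi : Fin I → Finset V) (w : Fin I → ℕ) (i₀ : Fin I)
    (hX₀ : Xi i₀ = ∅) (hw₀ : 0 < w i₀)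
    (M : Multiset (Finset V × Finset V)) (S : Multiset (Finset V × Finset V × Finset V))
    (C : Finset V) (hB : BInv ω α β ζ κ)
    (hid : StInv U lam Xj Yj Zj Gj α β ζ κ Xi Yi w i₀ M S C) :
    (∃ (lam' : Fin L → ℕ) (α' β' ζ' κ' : Fin J → ℕ) (M' : Multiset (Finset V × Finset V)),
      BInv ω α' β' ζ' κ' ∧ FinInv U lam' Xj Yj Zj Gj α' β' ζ' κ' Xi Yi w i₀ M' S ∧
      (∑ ℓ, lam ℓ) + (∑ j, κ j) ≤ (∑ ℓ, lam' ℓ) + (∑ j, κ' j) + 1) ∨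
    (∃ (e₀ : Finset V × Finset V × Finset V) (M' : Multiset (Finset V × Finset V))
        (C' : Finset V), e₀ ∈ S ∧
      StInv U lam Xj Yj Zj Gj α β ζ κ Xi Yi w i₀ M' (S.erase e₀) C') := by
  classical
  have hreach := reach_of_inv U lam Xj Yj Zj Gj α β ζ κ Xi Yi w i₀ hX₀ hw₀ M S C hB hid
  obtain ⟨l₀, hl₀M, hl₀gc, hl₀T⟩ := exists_chain hreach
  obtain ⟨l, hnd, hsub, hgc, hlast⟩ := chain_dedup l₀.length l₀ C le_rfl hl₀gc
  have hlM : ∀ e ∈ l, e ∈ M := fun e he => hl₀M e (hsub he)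
  have hle : (↑l : Multiset (Finset V × Finset V)) ≤ M := coe_le_of_nodup l M hnd hlM
  set D := lastD C l with hDdef
  have hTD : TermP U lam Xj Yj Zj Gj α β ζ κ S D := by
    rw [← hlast] at hl₀T; exact hl₀T
  set M₂ : Multiset (Finset V × Finset V) :=
    (M - ↑l) + (↑(newOf C l) : Multiset (Finset V × Finset V)) with hM₂def
  have hstar : StInv U lam Xj Yj Zj Gj α β ζ κ Xi Yi w i₀ M₂ S D := by
    intro h h0
    have hkey := hid h h0
    have htel := telescope h l C hgc
    have hMs : MSum h M = MSum h (M - ↑l) + MSum h ↑l := by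
      conv_lhs => rw [← tsub_add_cancel_of_le hle]
      rw [MSum_add]
    have hM₂s : MSum h M₂ = MSum h (M - ↑l) + MSum h ↑(newOf C l) := MSum_add h _ _
    rw [MSum_coe] at hMs hM₂s
    rw [← hDdef] at htel
    linarith [hkey, htel, hMs, hM₂s]
  rcases hTD with hD0 | ⟨ℓ₀, hl0, hsubU⟩ | ⟨j₀, hk, hsubG⟩ | ⟨j₀, hk, ha, hsubGX⟩ |
    ⟨j₀, hk, hb, hsubGY⟩ | ⟨j₀, hk, hz, hsubGZ⟩ | ⟨e₀, he₀, hsubE⟩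
  · -- debt resolved at ∅
    refine Or.inl ⟨lam, α, β, ζ, κ, M₂, hB, ?_, by omega⟩
    intro h h0
    have := hstar h h0
    rwa [hD0, h0, add_zero] at this
  · -- λ-terminal
    refine Or.inl ⟨Function.update lam ℓ₀ (lam ℓ₀ - 1), α, β, ζ, κ,
      (D, U ℓ₀) ::ₘ M₂, hB, ?_, ?_⟩
    · intro h h0
      have hs := hstar h h0
      have e1 := sum_split
        (fun ℓ => ((Function.update lam ℓ₀ (lam ℓ₀ - 1) ℓ : ℕ) : ℝ) * h (U ℓ))
        (fun ℓ => (lam ℓ : ℝ) * h (U ℓ)) ℓ₀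
        (fun j hj => by simp [Function.update_of_ne hj])
      simp only [Function.update_self] at e1
      have hc : ((lam ℓ₀ - 1 : ℕ) : ℝ) * h (U ℓ₀) = (lam ℓ₀ : ℝ) * h (U ℓ₀) - h (U ℓ₀) := by
        rw [Nat.cast_sub hl0]; ring
      have hDU : condH h (U ℓ₀) D = h (U ℓ₀) - h D := by
        simp only [condH]; rw [Finset.union_eq_right.mpr hsubU]
      simp only [ShannonLHS] at hs ⊢
      rw [e1, MSum_cons, hDU]
      linarith [hs, hc]
    · have := sum_split_nat (Function.update lam ℓ₀ (lam ℓ₀ - 1)) lam ℓ₀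
        (fun j hj => Function.update_of_ne hj _ _)
      rw [Function.update_self] at this
      omega
  · -- κ-terminal
    obtain ⟨α', β', ζ', κ', M', hB', hF, hcnt⟩ :=
      block_case hω U lam Xj Yj Zj Gj α β ζ κ Xi Yi w i₀ M₂ S D j₀ 0 0 0
        (Nat.zero_le _) (Nat.zero_le _) (Nat.zero_le _) (by omega) (by omega) (by omega)
        (by omega) hk (Gj j₀) hsubG (fun h => by norm_num) hB hstar
    exact Or.inl ⟨lam, α', β', ζ', κ', M', hB', hF, by omega⟩
  · -- α-terminal
    obtain ⟨α', β', ζ', κ', M', hB', hF, hcnt⟩ :=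
      block_case hω U lam Xj Yj Zj Gj α β ζ κ Xi Yi w i₀ M₂ S D j₀ 1 0 0
        ha (Nat.zero_le _) (Nat.zero_le _) (by omega) (by omega) (by omega)
        (by omega) hk (Gj j₀ ∪ Xj j₀) hsubGX
        (fun h => by
          simp only [condH, Nat.cast_one, Nat.cast_zero, one_mul, zero_mul, add_zero, zero_add]
          ring) hB hstar
    exact Or.inl ⟨lam, α', β', ζ', κ', M', hB', hF, by omega⟩
  · -- β-terminal
    obtain ⟨α', β', ζ', κ', M', hB', hF, hcnt⟩ :=
      block_case hω U lam Xj Yj Zj Gj α β ζ κ Xi Yi w i₀ M₂ S D j₀ 0 1 0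
        (Nat.zero_le _) hb (Nat.zero_le _) (by omega) (by omega) (by omega)
        (by omega) hk (Gj j₀ ∪ Yj j₀) hsubGY
        (fun h => by
          simp only [condH, Nat.cast_one, Nat.cast_zero, one_mul, zero_mul, add_zero, zero_add]
          ring) hB hstar
    exact Or.inl ⟨lam, α', β', ζ', κ', M', hB', hF, by omega⟩
  · -- ζ-terminal
    obtain ⟨α', β', ζ', κ', M', hB', hF, hcnt⟩ :=
      block_case hω U lam Xj Yj Zj Gj α β ζ κ Xi Yi w i₀ M₂ S D j₀ 0 0 1
        (Nat.zero_le _) (Nat.zero_le _) hz (by omega) (by omega) (by omega)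
        (by omega) hk (Gj j₀ ∪ Zj j₀) hsubGZ
        (fun h => by
          simp only [condH, Nat.cast_one, Nat.cast_zero, one_mul, zero_mul, add_zero, zero_add]
          ring) hB hstar
    exact Or.inl ⟨lam, α', β', ζ', κ', M', hB', hF, by omega⟩
  · -- submodularity move : recurse
    rcases hsubE with hDY | hDZ
    · refine Or.inr ⟨e₀, (D, e₀.1 ∪ e₀.2.1) ::ₘ (e₀.1, e₀.2.2) ::ₘ M₂,
        e₀.1 ∪ e₀.2.1 ∪ e₀.2.2, he₀, ?_⟩
      intro h h0
      have hs := hstar h h0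
      have hSs : SSum h S = condMI h e₀.2.1 e₀.2.2 e₀.1 + SSum h (S.erase e₀) := by
        conv_lhs => rw [← Multiset.cons_erase he₀]
        rw [SSum_cons]
      have h1 : condH h (e₀.1 ∪ e₀.2.1) D = h (e₀.1 ∪ e₀.2.1) - h D := by
        simp only [condH]; rw [Finset.union_eq_right.mpr hDY]
      rw [MSum_cons, MSum_cons, h1]
      simp only [condMI] at hSs
      simp only [condH] at hs ⊢
      linarith [hs, hSs]
    · refine Or.inr ⟨e₀, (D, e₀.1 ∪ e₀.2.2) ::ₘ (e₀.1, e₀.2.1) ::ₘ M₂,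
        e₀.1 ∪ e₀.2.1 ∪ e₀.2.2, he₀, ?_⟩
      intro h h0
      have hs := hstar h h0
      have hSs : SSum h S = condMI h e₀.2.1 e₀.2.2 e₀.1 + SSum h (S.erase e₀) := by
        conv_lhs => rw [← Multiset.cons_erase he₀]
        rw [SSum_cons]
      have h1 : condH h (e₀.1 ∪ e₀.2.2) D = h (e₀.1 ∪ e₀.2.2) - h D := by
        simp only [condH]; rw [Finset.union_eq_right.mpr hDZ]
      rw [MSum_cons, MSum_cons, h1]
      simp only [condMI] at hSs
      simp only [condH] at hs ⊢
      linarith [hs, hSs]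

end GRL
namespace GRL

set_option linter.unusedSectionVars false
set_option maxHeartbeats 1000000

variable {V : Type*} [DecidableEq V] [Fintype V]

lemma map_sum_nonneg {γ : Type*} (M : Multiset γ) (f : γ → ℝ)
    (h : ∀ e ∈ M, 0 ≤ f e) : 0 ≤ (M.map f).sum := by
  induction M using Multiset.induction with
  | empty => simp
  | cons a M ih =>
      simp only [Multiset.map_cons, Multiset.sum_cons]
      exact add_nonneg (h a (Multiset.mem_cons_self a M))
        (ih fun e he => h e (Multiset.mem_cons_of_mem he))

lemma loop {L J I : ℕ} {ω : ℝ} (hω : 1 ≤ ω)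
    (U : Fin L → Finset V) (Xj Yj Zj Gj : Fin J → Finset V)
    (Xi Yi : Fin I → Finset V) (w : Fin I → ℕ) (i₀ : Fin I)
    (hX₀ : Xi i₀ = ∅) (hw₀ : 0 < w i₀) :
    ∀ (n : ℕ) (S : Multiset (Finset V × Finset V × Finset V)), S.card ≤ n →
      ∀ (M : Multiset (Finset V × Finset V)) (lam : Fin L → ℕ) (α β ζ κ : Fin J → ℕ)
        (C : Finset V), BInv ω α β ζ κ →
        StInv U lam Xj Yj Zj Gj α β ζ κ Xi Yi w i₀ M S C →
        ∃ (lam' : Fin L → ℕ) (α' β' ζ' κ' : Fin J → ℕ)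
          (M' : Multiset (Finset V × Finset V))
          (S' : Multiset (Finset V × Finset V × Finset V)),
          BInv ω α' β' ζ' κ' ∧ FinInv U lam' Xj Yj Zj Gj α' β' ζ' κ' Xi Yi w i₀ M' S' ∧
          (∑ ℓ, lam ℓ) + (∑ j, κ j) ≤ (∑ ℓ, lam' ℓ) + (∑ j, κ' j) + 1 := by
  intro n
  induction n with
  | zero =>
      intro S hS M lam α β ζ κ C hB hid
      rcases step_or_recurse hω U lam Xj Yj Zj Gj α β ζ κ Xi Yi w i₀ hX₀ hw₀ M S C hB hid with
        ⟨lam', α', β', ζ', κ', M', hB', hF, hc⟩ | ⟨e₀, M', C', he₀, -⟩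
      · exact ⟨lam', α', β', ζ', κ', M', S, hB', hF, hc⟩
      · exfalso
        have : S = 0 := Multiset.card_eq_zero.mp (Nat.le_zero.mp hS)
        subst this
        exact Multiset.notMem_zero e₀ he₀
  | succ n ih =>
      intro S hS M lam α β ζ κ C hB hid
      rcases step_or_recurse hω U lam Xj Yj Zj Gj α β ζ κ Xi Yi w i₀ hX₀ hw₀ M S C hB hid with
        ⟨lam', α', β', ζ', κ', M', hB', hF, hc⟩ | ⟨e₀, M', C', he₀, hid'⟩
      · exact ⟨lam', α', β', ζ', κ', M', S, hB', hF, hc⟩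
      · have h1 : 0 < S.card := Multiset.card_pos.mpr (fun h0 => by subst h0; exact Multiset.notMem_zero e₀ he₀)
        have h2 := Multiset.card_erase_of_mem he₀
        rw [Nat.pred_eq_sub_one] at h2
        have hcard : (S.erase e₀).card ≤ n := by omega
        exact ih (S.erase e₀) hcard M' lam α β ζ κ C' hB hid'

end GRL

set_option maxHeartbeats 1000000 in
/-- Generalized Reset Lemma. -/
theorem generalized_reset_lemma {V : Type*} [DecidableEq V] [Fintype V]
    (ω : ℝ) (hω₂ : 2 ≤ ω) (hω₃ : ω ≤ 3)
    {L J I : ℕ}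
    (U : Fin L → Finset V) (Xj Yj Zj Gj : Fin J → Finset V)
    (Xi Yi : Fin I → Finset V)
    (lam : Fin L → ℕ) (α β ζ κ : Fin J → ℕ) (w : Fin I → ℕ)
    (hκ : ∀ j, 0 < κ j)
    (hdom : ∀ j, OmegaDominant ω ((α j : ℝ) / (κ j : ℝ)) ((β j : ℝ) / (κ j : ℝ))
      ((ζ j : ℝ) / (κ j : ℝ)))
    (hvalid : ∀ h : Finset V → ℝ, IsPolymatroid h →
      ShannonLHS h U lam Xj Yj Zj Gj α β ζ κ ≤ ShannonRHS h Xi Yi w)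
    (hcert : IntegralCert U lam Xj Yj Zj Gj α β ζ κ Xi Yi w)
    (i₀ : Fin I) (hX₀ : Xi i₀ = (∅ : Finset V)) (hw₀ : 0 < w i₀) :
    ∃ (lam' : Fin L → ℕ) (α' β' ζ' κ' : Fin J → ℕ) (w' : Fin I → ℕ)
      (J' : Finset (Fin J)),
      (∀ j ∈ J', 0 < κ' j) ∧
      (∀ j ∉ J', α' j = 0 ∧ β' j = 0 ∧ ζ' j = 0 ∧ κ' j = 0) ∧
      (∀ j ∈ J', OmegaDominant ω ((α' j : ℝ) / (κ' j : ℝ)) ((β' j : ℝ) / (κ' j : ℝ))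
        ((ζ' j : ℝ) / (κ' j : ℝ))) ∧
      (∀ h : Finset V → ℝ, IsPolymatroid h →
        ShannonLHS h U lam' Xj Yj Zj Gj α' β' ζ' κ' ≤ ShannonRHS h Xi Yi w') ∧
      IntegralCert U lam' Xj Yj Zj Gj α' β' ζ' κ' Xi Yi w' ∧
      w' i₀ + 1 ≤ w i₀ ∧
      (∀ i : Fin I, i ≠ i₀ → w' i ≤ w i) ∧
      (∑ ℓ, lam ℓ) + (∑ j, κ j) ≤ (∑ ℓ, lam' ℓ) + (∑ j, κ' j) + 1 := by
  
  classical
  obtain ⟨P, Q, Xp, Yp, Xq, Yq, Zq, m, s, hcid⟩ := hcert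
  have hω : (1 : ℝ) ≤ ω := by linarith
  have hM₀ : ∀ h : Finset V → ℝ,
      GRL.MSum h (∑ p, Multiset.replicate (m p) (Xp p, Yp p)) =
        ∑ p, (m p : ℝ) * condH h (Yp p) (Xp p) := by
    intro h
    have := GRL.msum_of_fin (fun p => (Xp p, Yp p)) m (fun e => condH h e.2 e.1)
    simpa [GRL.MSum] using this
  have hS₀ : ∀ h : Finset V → ℝ,
      GRL.SSum h (∑ q, Multiset.replicate (s q) (Xq q, Yq q, Zq q)) =
        ∑ q, (s q : ℝ) * condMI h (Yq q) (Zq q) (Xq q) := by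
    intro h
    have := GRL.msum_of_fin (fun q => (Xq q, Yq q, Zq q)) s
      (fun e => condMI h e.2.1 e.2.2 e.1)
    simpa [GRL.SSum] using this
  have hB₀ : GRL.BInv ω α β ζ κ := fun j => Or.inl ⟨hκ j, hdom j⟩
  have hid₀ : GRL.StInv U lam Xj Yj Zj Gj α β ζ κ Xi Yi w i₀
      (∑ p, Multiset.replicate (m p) (Xp p, Yp p))
      (∑ q, Multiset.replicate (s q) (Xq q, Yq q, Zq q)) (Yi i₀) := by
    intro h h0
    have hc := hcid h h0
    have hcH : condH h (Yi i₀) (Xi i₀) = h (Yi i₀) := by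
      simp [condH, hX₀, h0]
    rw [hM₀ h, hS₀ h, hcH]
    linarith [hc]
  obtain ⟨lam', α', β', ζ', κ', M', S', hB', hF, hcnt⟩ :=
    GRL.loop hω U Xj Yj Zj Gj Xi Yi w i₀ hX₀ hw₀
      (∑ q, Multiset.replicate (s q) (Xq q, Yq q, Zq q)).card
      (∑ q, Multiset.replicate (s q) (Xq q, Yq q, Zq q)) le_rfl
      (∑ p, Multiset.replicate (m p) (Xp p, Yp p)) lam α β ζ κ (Yi i₀) hB₀ hid₀
  have hw' : ∀ h : Finset V → ℝ,
      ShannonRHS h Xi Yi (Function.update w i₀ (w i₀ - 1)) =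
        ShannonRHS h Xi Yi w - condH h (Yi i₀) (Xi i₀) := by
    intro h
    unfold ShannonRHS
    have e1 := GRL.sum_split
      (fun i => ((Function.update w i₀ (w i₀ - 1) i : ℕ) : ℝ) * condH h (Yi i) (Xi i))
      (fun i => (w i : ℝ) * condH h (Yi i) (Xi i)) i₀
      (fun i hi => by simp [Function.update_of_ne hi])
    simp only [Function.update_self] at e1
    have hc : ((w i₀ - 1 : ℕ) : ℝ) * condH h (Yi i₀) (Xi i₀) =
        (w i₀ : ℝ) * condH h (Yi i₀) (Xi i₀) - condH h (Yi i₀) (Xi i₀) := by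
      rw [Nat.cast_sub hw₀]; ring
    rw [e1]
    linarith [hc]
  obtain ⟨Pn, gP, hgP⟩ := GRL.exists_fin_enum M'
  obtain ⟨Qn, gQ, hgQ⟩ := GRL.exists_fin_enum S'
  refine ⟨lam', α', β', ζ', κ', Function.update w i₀ (w i₀ - 1),
    Finset.univ.filter (fun j => 0 < κ' j), ?_, ?_, ?_, ?_, ?_, ?_, ?_, ?_⟩
  · intro j hj
    exact (Finset.mem_filter.mp hj).2
  · intro j hj
    have hnk : ¬ 0 < κ' j := fun hk => hj (Finset.mem_filter.mpr ⟨Finset.mem_univ j, hk⟩)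
    rcases hB' j with ⟨hk, -⟩ | hzero
    · exact absurd hk hnk
    · exact hzero
  · intro j hj
    have hk := (Finset.mem_filter.mp hj).2
    rcases hB' j with ⟨-, hd⟩ | ⟨-, -, -, hk0⟩
    · exact hd
    · omega
  · intro h hp
    have hfin := hF h hp.1
    have hMnn : 0 ≤ GRL.MSum h M' :=
      GRL.map_sum_nonneg M' _ (fun e _ => GRL.condH_nonneg hp e.2 e.1)
    have hSnn : 0 ≤ GRL.SSum h S' :=
      GRL.map_sum_nonneg S' _ (fun e _ => GRL.condMI_nonneg hp e.2.1 e.2.2 e.1)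
    rw [hw' h]
    linarith [hfin]
  · refine ⟨Pn, Qn, fun p => (gP p).1, fun p => (gP p).2, fun q => (gQ q).1,
      fun q => (gQ q).2.1, fun q => (gQ q).2.2, fun _ => 1, fun _ => 1, ?_⟩
    intro h h0
    have hfin := hF h h0
    have e1 := hgP (fun e => condH h e.2 e.1)
    have e2 := hgQ (fun e => condMI h e.2.1 e.2.2 e.1)
    rw [hw' h]
    simp only [Nat.cast_one, one_mul]
    have e1' : GRL.MSum h M' = ∑ p, condH h (gP p).2 (gP p).1 := e1
    have e2' : GRL.SSum h S' = ∑ q, condMI h (gQ q).2.1 (gQ q).2.2 (gQ q).1 := e2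
    linarith [hfin]
  · rw [Function.update_self]; omega
  · intro i hi
    rw [Function.update_of_ne hi]
  · exact hcnt
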